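/- Let q = 2^s, t ≥ 4, and n = (q^t - 1)/(q - 1). Then there exists α in the algebraic closure of 𝔽_2 with α^n = 1 and (α+1)^n = 1. -/

import Mathlib

set_option maxHeartbeats 1000000

open Finset

private lemma aux_key (K : Type*) [Field K] [Fintype K] [CharP K 2] (q t n : ℕ)
    (hq : 2 ≤ q) (ht : 4 ≤ t) (hcard : Fintype.card K = q ^ t)
    (hn : n * (q - 1) = q ^ t - 1) :
    ∃ x : K, x ^ n = 1 ∧ (1 - x) ^ n = 1 := by
  classical
  set d := q - 1 with hd_def
  have hd1 : 1 ≤ d := by omega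
  have hn0 : n ≠ 0 := by
    rintro rfl
    have : q ^ t - 1 = 0 := by omega
    have : 2 ^ t ≤ q ^ t := Nat.pow_le_pow_left hq t
    have : 2 ^ 4 ≤ 2 ^ t := Nat.pow_le_pow_right (by norm_num) ht
    omega
  have hcardu : Fintype.card Kˣ = n * d := by
    rw [Fintype.card_units, hcard, hn]
  obtain ⟨g, hg⟩ := IsCyclic.exists_generator (α := Kˣ)
  have hgord : orderOf g = n * d := by
    rw [orderOf_eq_card_of_forall_mem_zpowers hg, Nat.card_eq_fintype_card, hcardu]
  -- characters
  haveI : NeZero ((Monoid.exponent Kˣ : ℂ)) :=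
    ⟨Nat.cast_ne_zero.mpr (Monoid.exponent_ne_zero_of_finite)⟩
  obtain ⟨Φ⟩ := MulChar.mulEquiv_units K ℂ
  set χ : MulChar K ℂ := Φ.symm (g ^ n) with hχ_def
  have hχord : orderOf χ = d := by
    rw [hχ_def, MulEquiv.orderOf_eq, orderOf_pow, hgord, Nat.gcd_eq_right (dvd_mul_right n d),
      Nat.mul_div_cancel_left d (by omega)]
  set ζ : ℂ := χ ↑g with hζ_def
  have hpow_iff : ∀ k : ℕ, χ ^ k = 1 ↔ ζ ^ k = 1 := by
    intro k
    constructor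
    · intro h
      rw [hζ_def, ← MulChar.pow_apply_coe, h, MulChar.one_apply_coe]
    · intro h
      ext a
      obtain ⟨m, hm⟩ : ∃ m : ℕ, g ^ m = a :=
        (Submonoid.mem_powers_iff _ _).mp (mem_powers_iff_mem_zpowers.mpr (hg a))
      subst hm
      rw [MulChar.one_apply_coe, MulChar.pow_apply_coe, Units.val_pow_eq_pow_val, map_pow,
        ← hζ_def, ← pow_mul, mul_comm m k, pow_mul, h, one_pow]
  have hζord : orderOf ζ = d := by
    rw [← hχord]
    exact orderOf_eq_orderOf_iff.mpr fun k => (hpow_iff k).symm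
  have hχd : χ ^ d = 1 := by rw [← hχord]; exact pow_orderOf_eq_one χ
  -- Claim A : character kernel is the n-th roots of unity
  have claimA : ∀ u : Kˣ, χ ↑u = 1 ↔ ((u : K)) ^ n = 1 := by
    intro u
    obtain ⟨m, hm⟩ : ∃ m : ℕ, g ^ m = u :=
      (Submonoid.mem_powers_iff _ _).mp (mem_powers_iff_mem_zpowers.mpr (hg u))
    subst hm
    have h1 : (ζ ^ m = 1) ↔ d ∣ m := by
      rw [← hζord]; exact (orderOf_dvd_iff_pow_eq_one).symm
    have h2 : (((g ^ m : Kˣ) : K) ^ n = 1) ↔ n * d ∣ m * n := by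
      rw [← Units.val_pow_eq_pow_val, ← pow_mul, Units.val_eq_one, ← hgord]
      exact (orderOf_dvd_iff_pow_eq_one).symm
    rw [h2, Units.val_pow_eq_pow_val, map_pow, ← hζ_def, h1, mul_comm m n]
    exact (Nat.mul_dvd_mul_iff_left (by omega : 0 < n)).symm
  -- Lemma B : character sum is indicator of n-th roots of unity
  have lemB : ∀ x : K, (∑ j ∈ range d, (χ ^ j) x) = if x ^ n = 1 then (d : ℂ) else 0 := by
    intro x
    by_cases hx : IsUnit x
    · have hval : ∀ j : ℕ, (χ ^ j) x = (χ x) ^ j := by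
        intro j
        conv_lhs => rw [← hx.unit_spec]
        rw [MulChar.pow_apply_coe, hx.unit_spec]
      by_cases h1 : x ^ n = 1
      · have hone : χ x = 1 := by
          have := (claimA hx.unit).mpr (by rwa [hx.unit_spec])
          rwa [hx.unit_spec] at this
        simp [hval, hone, h1]
      · have hz : χ x ≠ 1 := by
          intro h
          apply h1
          have := (claimA hx.unit).mp (by rwa [hx.unit_spec])
          rwa [hx.unit_spec] at this
        have hzd : (χ x) ^ d = 1 := by
          rw [← hval d, hχd, ← hx.unit_spec, MulChar.one_apply_coe]
        rw [if_neg h1]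
        simp only [hval]
        rw [geom_sum_eq hz, hzd, sub_self, zero_div]
    · have hxn : ¬ x ^ n = 1 := fun h => hx (IsUnit.of_pow_eq_one h hn0)
      rw [if_neg hxn]
      exact Finset.sum_eq_zero fun j _ => MulChar.map_nonunit _ hx
  -- the solution set
  set S : Finset K := univ.filter (fun x => x ^ n = 1 ∧ (1 - x) ^ n = 1) with hS_def
  -- main identity
  have hTid : ∑ j ∈ range d, ∑ k ∈ range d, jacobiSum (χ ^ j) (χ ^ k)
      = (d : ℂ) ^ 2 * S.card := by
    simp only [jacobiSum]
    have e1 : ∀ j ∈ range d, (∑ k ∈ range d, ∑ x : K, (χ ^ j) x * (χ ^ k) (1 - x))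
        = ∑ x : K, ∑ k ∈ range d, (χ ^ j) x * (χ ^ k) (1 - x) := fun j _ => Finset.sum_comm
    rw [Finset.sum_congr rfl e1, Finset.sum_comm]
    have e2 : ∀ x : K, (∑ j ∈ range d, ∑ k ∈ range d, (χ ^ j) x * (χ ^ k) (1 - x))
        = (∑ j ∈ range d, (χ ^ j) x) * (∑ k ∈ range d, (χ ^ k) (1 - x)) := by
      intro x
      rw [Finset.sum_mul_sum]
    rw [Finset.sum_congr rfl fun x _ => e2 x]
    have e3 : ∀ x : K, (∑ j ∈ range d, (χ ^ j) x) * (∑ k ∈ range d, (χ ^ k) (1 - x))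
        = if (x ^ n = 1 ∧ (1 - x) ^ n = 1) then (d : ℂ) ^ 2 else 0 := by
      intro x
      rw [lemB x, lemB (1 - x)]
      by_cases h1 : x ^ n = 1 <;> by_cases h2 : (1 - x) ^ n = 1 <;> simp [h1, h2, sq]
    rw [Finset.sum_congr rfl fun x _ => e3 x, ← Finset.sum_filter, hS_def, Finset.sum_const,
      nsmul_eq_mul, mul_comm]
  -- cardinality facts
  set Q := Fintype.card K with hQ_def
  have hQ16 : (16 : ℕ) ≤ Q := by
    rw [hcard]
    calc (16:ℕ) = 2 ^ 4 := by norm_num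
    _ ≤ q ^ 4 := Nat.pow_le_pow_left hq 4
    _ ≤ q ^ t := Nat.pow_le_pow_right (by omega) ht
  have hringchar : ringChar ℂ ≠ ringChar K := by
    have h2 : ringChar K = 2 := ringChar.eq K 2
    rw [ringChar.eq_zero, h2]
    norm_num
  have hnontriv : ∀ j, 0 < j → j < d → χ ^ j ≠ 1 := by
    intro j hj hjd h
    have hdvd : d ∣ j := by rw [← hχord]; exact orderOf_dvd_of_pow_eq_one h
    have := Nat.le_of_dvd hj hdvd
    omega
  -- conjugation of characters and Jacobi sums
  have hconjval : ∀ (ψ : MulChar K ℂ) (x : K), (starRingEnd ℂ) (ψ x) = ψ⁻¹ x := by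
    intro ψ x
    by_cases hx : IsUnit x
    · have hxp : x ^ (Q - 1) = 1 := by
        rw [hQ_def]
        exact FiniteField.pow_card_sub_one_eq_one x hx.ne_zero
      have hzp : (ψ x) ^ (Q - 1) = 1 := by rw [← map_pow, hxp, map_one]
      have habs : ‖ψ x‖ = 1 := by
        have h1 : ‖ψ x‖ ^ (Q - 1) = 1 := by
          rw [← norm_pow, hzp, norm_one]
        have hQ1 : Q - 1 ≠ 0 := by omega
        rcases (pow_eq_one_iff_cases.mp h1) with h | h | h
        · exact absurd h hQ1
        · exact h
        · have h0 := norm_nonneg (ψ x)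
          rw [h.1] at h0
          linarith
      rw [MulChar.inv_apply_eq_inv', ← Complex.inv_eq_conj habs]
    · rw [MulChar.map_nonunit _ hx, MulChar.map_nonunit _ hx, map_zero]
  have hconjJ : ∀ ψ φ : MulChar K ℂ,
      jacobiSum ψ⁻¹ φ⁻¹ = (starRingEnd ℂ) (jacobiSum ψ φ) := by
    intro ψ φ
    simp only [jacobiSum, map_sum, map_mul, hconjval]
  -- bound on each nontrivial Jacobi sum
  have hsq1 : (1:ℝ) ≤ Real.sqrt Q := by
    rw [show (1:ℝ) = Real.sqrt 1 by simp]
    exact Real.sqrt_le_sqrt (by exact_mod_cast by omega)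
  have hJbound : ∀ j k : ℕ, j < d → k < d → ¬(j = 0 ∧ k = 0) →
      ‖jacobiSum (χ ^ j) (χ ^ k)‖ ≤ Real.sqrt Q := by
    intro j k hj hk hjk
    rcases Nat.eq_zero_or_pos j with rfl | hj0
    · rcases Nat.eq_zero_or_pos k with rfl | hk0
      · exact absurd ⟨rfl, rfl⟩ hjk
      · rw [pow_zero, jacobiSum_one_nontrivial (hnontriv k hk0 hk)]
        simpa using hsq1
    · rcases Nat.eq_zero_or_pos k with rfl | hk0
      · rw [pow_zero, jacobiSum_comm, jacobiSum_one_nontrivial (hnontriv j hj0 hj)]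
        simpa using hsq1
      · by_cases hsum : χ ^ j * χ ^ k = 1
        · have hinv : χ ^ k = (χ ^ j)⁻¹ := eq_inv_of_mul_eq_one_right hsum
          rw [hinv, jacobiSum_nontrivial_inv (hnontriv j hj0 hj)]
          have hneg : (-1 : K) = 1 := CharTwo.neg_eq 1
          rw [hneg, map_one]
          simpa using hsq1
        · have hmul := jacobiSum_mul_jacobiSum_inv hringchar (hnontriv j hj0 hj)
            (hnontriv k hk0 hk) hsum
          rw [hconjJ] at hmul
          have habs : ‖jacobiSum (χ ^ j) (χ ^ k)‖ ^ 2 = (Q : ℝ) := by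
            have := congrArg (‖·‖) hmul
            rwa [norm_mul, Complex.norm_conj, ← sq, Complex.norm_natCast, ← hQ_def] at this
          rw [← habs, Real.sqrt_sq (norm_nonneg _)]
  -- split off the trivial term
  have h00mem : ((0,0) : ℕ × ℕ) ∈ range d ×ˢ range d := by
    simp only [Finset.mem_product, Finset.mem_range]
    omega
  have hsplit : (∑ j ∈ range d, ∑ k ∈ range d, jacobiSum (χ ^ j) (χ ^ k))
      = jacobiSum (χ ^ (0:ℕ)) (χ ^ (0:ℕ)) +
        ∑ p ∈ (range d ×ˢ range d).erase (0,0), jacobiSum (χ ^ p.1) (χ ^ p.2) := by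
    rw [← Finset.sum_product']
    exact (Finset.add_sum_erase _ _ h00mem).symm
  have hJ00 : jacobiSum (χ ^ (0:ℕ)) (χ ^ (0:ℕ)) = (Q : ℂ) - 2 := by
    rw [pow_zero, jacobiSum_one_one, hQ_def]
  have hcarderase : ((range d ×ˢ range d).erase (0,0)).card = d * d - 1 := by
    rw [Finset.card_erase_of_mem h00mem, Finset.card_product, Finset.card_range]
  have herr : ‖∑ p ∈ (range d ×ˢ range d).erase (0,0),
      jacobiSum (χ ^ p.1) (χ ^ p.2)‖ ≤ (d * d - 1 : ℕ) * Real.sqrt Q := by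
    calc ‖∑ p ∈ (range d ×ˢ range d).erase (0,0), jacobiSum (χ ^ p.1) (χ ^ p.2)‖
        ≤ ∑ p ∈ (range d ×ˢ range d).erase (0,0), ‖jacobiSum (χ ^ p.1) (χ ^ p.2)‖ :=
          norm_sum_le _ _
      _ ≤ ∑ _p ∈ (range d ×ˢ range d).erase (0,0), Real.sqrt Q := by
          refine Finset.sum_le_sum fun p hp => ?_
          have hp1 := Finset.mem_erase.mp hp
          have hp2 := Finset.mem_product.mp hp1.2
          refine hJbound p.1 p.2 (Finset.mem_range.mp hp2.1) (Finset.mem_range.mp hp2.2) ?_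
          rintro ⟨h1, h2⟩
          exact hp1.1 (Prod.ext h1 h2)
      _ = (d * d - 1 : ℕ) * Real.sqrt Q := by
          rw [Finset.sum_const, hcarderase, nsmul_eq_mul]
  -- real estimates
  have hqR : (2:ℝ) ≤ (q:ℝ) := by exact_mod_cast hq
  have hQR : (Q:ℝ) = (q:ℝ) ^ t := by rw [hcard]; push_cast; ring
  have hsqge : ((q:ℝ))^2 ≤ Real.sqrt Q := by
    rw [show ((q:ℝ))^2 = Real.sqrt (((q:ℝ))^4) by
      rw [show ((q:ℝ))^4 = (((q:ℝ))^2)^2 by ring, Real.sqrt_sq (by positivity)]]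
    apply Real.sqrt_le_sqrt
    rw [hQR]
    exact pow_le_pow_right₀ (by linarith) ht
  have hss : Real.sqrt Q * Real.sqrt Q = (Q:ℝ) := Real.mul_self_sqrt (by positivity)
  have hdR : (d:ℝ) = (q:ℝ) - 1 := by
    rw [hd_def, Nat.cast_sub (by omega : 1 ≤ q)]
    norm_num
  -- S is nonempty
  have hSpos : 0 < S.card := by
    by_contra hS0
    have hS0' : S.card = 0 := by omega
    have hE : (∑ p ∈ (range d ×ˢ range d).erase (0,0), jacobiSum (χ ^ p.1) (χ ^ p.2))
        = -((Q:ℂ) - 2) := by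
      have h := hTid
      rw [hsplit, hJ00, hS0'] at h
      push_cast at h
      linear_combination h
    rw [hE, norm_neg] at herr
    have habsQ : ‖(Q:ℂ) - 2‖ = (Q:ℝ) - 2 := by
      rw [show ((Q:ℂ) - 2) = (((Q:ℝ) - 2 : ℝ) : ℂ) by push_cast; ring, Complex.norm_real, Real.norm_eq_abs,
        abs_of_nonneg (by
          have h16 : (16:ℝ) ≤ (Q:ℝ) := by exact_mod_cast hQ16
          linarith)]
    rw [habsQ] at herr
    have hcast : ((d * d - 1 : ℕ) : ℝ) ≤ (d:ℝ) * (d:ℝ) := by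
      calc ((d * d - 1 : ℕ) : ℝ) ≤ ((d * d : ℕ) : ℝ) := by
            exact_mod_cast Nat.cast_le.mpr (by omega : d * d - 1 ≤ d * d)
        _ = (d:ℝ) * (d:ℝ) := by push_cast; ring
    have herr2 : (Q:ℝ) - 2 ≤ (d:ℝ) * (d:ℝ) * Real.sqrt Q := by
      refine le_trans herr ?_
      exact mul_le_mul_of_nonneg_right hcast (Real.sqrt_nonneg _)
    have hkey : (q:ℝ)^2 * (2*(q:ℝ) - 1) ≤ Real.sqrt Q * (Real.sqrt Q - ((q:ℝ)-1)^2) := by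
      apply mul_le_mul hsqge (by nlinarith [hsqge]) (by linarith) (Real.sqrt_nonneg _)
    rw [hdR] at herr2
    have h12 : (12:ℝ) ≤ (q:ℝ)^2*(2*(q:ℝ)-1) := by nlinarith [hqR]
    nlinarith [hkey, herr2, hss, h12]
  obtain ⟨x, hx⟩ := Finset.card_pos.mp hSpos
  rw [hS_def, Finset.mem_filter] at hx
  exact ⟨x, hx.2.1, hx.2.2⟩

theorem stmt_9 (s t : ℕ) (hs : 1 ≤ s) (ht : 4 ≤ t) (q n : ℕ)
    (hq : q = 2 ^ s) (hn : n = (q ^ t - 1) / (q - 1)) :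
    ∃ α : AlgebraicClosure (ZMod 2), α ^ n = 1 ∧ (α + 1) ^ n = 1 := by
  have hq2 : 2 ≤ q := by
    rw [hq]
    calc 2 = 2^1 := (pow_one 2).symm
    _ ≤ 2^s := Nat.pow_le_pow_right (by norm_num) hs
  have hdvd : (q - 1) ∣ q ^ t - 1 := by
    simpa using Nat.sub_dvd_pow_sub_pow q 1 t
  have hmul : n * (q - 1) = q ^ t - 1 := by
    rw [hn]; exact Nat.div_mul_cancel hdvd
  set K := GaloisField 2 (s * t) with hK
  letI : Fintype K := Fintype.ofFinite K
  have hst : s * t ≠ 0 := Nat.mul_ne_zero (by omega) (by omega)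
  have hcard : Fintype.card K = q ^ t := by
    rw [← Nat.card_eq_fintype_card, hK, GaloisField.card 2 (s * t) hst, hq, ← pow_mul]
  obtain ⟨x, hx1, hx2⟩ := aux_key K q t n hq2 ht hcard hmul
  have halg : Algebra.IsAlgebraic (ZMod 2) K := Algebra.IsAlgebraic.of_finite _ _
  let φ : K →ₐ[ZMod 2] AlgebraicClosure (ZMod 2) := IsAlgClosed.lift
  refine ⟨φ x, ?_, ?_⟩
  · rw [← map_pow, hx1, map_one]
  · have h1 : (φ x + 1) = φ (x + 1) := by rw [map_add, map_one]
    have h2 : (x + 1 : K) = 1 - x := by rw [CharTwo.sub_eq_add]; ring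
    rw [h1, ← map_pow, h2, hx2, map_one]
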